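/- Let $B = \begin{bmatrix} D & C \\ -C^\top & 0 \end{bmatrix}$ where $D \in \mathbb{R}^{n\times n}$ is symmetric positive definite and $C \in \mathbb{R}^{n \times m}$ has full column rank. Then every eigenvalue $\mu$ of $B$ satisfies $\operatorname{Re}(\mu) > 0$. -/

import Mathlib

open Matrix

lemma re_quad {n : ℕ} (D : Matrix (Fin n) (Fin n) ℝ) (ζ : Fin n → ℂ) :
    (star ζ ⬝ᵥ (D.map Complex.ofReal) *ᵥ ζ).re =
      (fun i => (ζ i).re) ⬝ᵥ D *ᵥ (fun i => (ζ i).re)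
      + (fun i => (ζ i).im) ⬝ᵥ D *ᵥ (fun i => (ζ i).im) := by
  simp only [dotProduct, mulVec, map_apply, Pi.star_apply, Finset.mul_sum,
    Complex.re_sum, Complex.mul_re, Complex.mul_im, Complex.ofReal_re, Complex.ofReal_im,
    RCLike.star_def, Complex.conj_re, Complex.conj_im]
  rw [← Finset.sum_add_distrib]
  refine Finset.sum_congr rfl fun i _ => ?_
  rw [← Finset.sum_add_distrib]
  refine Finset.sum_congr rfl fun j _ => ?_
  ring

lemma re_cross {n m : ℕ} (C : Matrix (Fin n) (Fin m) ℝ) (ζ : Fin n → ℂ) (w : Fin m → ℂ) :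
    (star ζ ⬝ᵥ (C.map Complex.ofReal) *ᵥ w).re =
      (star w ⬝ᵥ (Cᵀ.map Complex.ofReal) *ᵥ ζ).re := by
  simp only [dotProduct, mulVec, map_apply, Pi.star_apply, Finset.mul_sum,
    Complex.re_sum, Complex.mul_re, Complex.mul_im, Complex.ofReal_re, Complex.ofReal_im,
    RCLike.star_def, Complex.conj_re, Complex.conj_im, transpose_apply]
  rw [Finset.sum_comm]
  refine Finset.sum_congr rfl fun i _ => Finset.sum_congr rfl fun j _ => by ring

/-- Every (complex) eigenvalue of `[[D, C], [-Cᵀ, 0]]` with `D` symmetric positive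
definite and `C` of full column rank has strictly positive real part. -/
theorem stmt5 {n m : ℕ} (D : Matrix (Fin n) (Fin n) ℝ) (C : Matrix (Fin n) (Fin m) ℝ)
    (hD : D.PosDef) (hC : Function.Injective C.mulVec) (μ : ℂ)
    (hμ : ∃ v : (Fin n ⊕ Fin m) → ℂ, v ≠ 0 ∧
      ((Matrix.fromBlocks D C (-Cᵀ) 0).map (Complex.ofReal)).mulVec v = μ • v) :
    0 < μ.re := by
  obtain ⟨v, hv0, hev⟩ := hμ
  set ζ : Fin n → ℂ := fun i => v (Sum.inl i) with hζ
  set w : Fin m → ℂ := fun j => v (Sum.inr j) with hw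
  have hv : v = Sum.elim ζ w := by funext x; cases x <;> rfl
  -- ζ ≠ 0
  have hζ0 : ζ ≠ 0 := by
    intro hz
    apply hv0
    have hCw : (C.map Complex.ofReal) *ᵥ w = 0 := by
      funext i
      have := congrFun hev (Sum.inl i)
      rw [hv] at this
      simpa [fromBlocks_map, fromBlocks_mulVec, hz] using this
    have hwre : (fun j => (w j).re) = 0 := by
      apply hC
      rw [mulVec_zero]
      funext i
      have := congrArg Complex.re (congrFun hCw i)
      simpa [mulVec, dotProduct, map_apply, Complex.re_sum, Complex.mul_re,
        Complex.ofReal_re, Complex.ofReal_im] using this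
    have hwim : (fun j => (w j).im) = 0 := by
      apply hC
      rw [mulVec_zero]
      funext i
      have := congrArg Complex.im (congrFun hCw i)
      simpa [mulVec, dotProduct, map_apply, Complex.im_sum, Complex.mul_im,
        Complex.ofReal_re, Complex.ofReal_im] using this
    have hw0 : w = 0 := by
      funext j
      have h1 := congrFun hwre j
      have h2 := congrFun hwim j
      simp only [Pi.zero_apply] at h1 h2 ⊢
      exact Complex.ext h1 h2
    rw [hv, hz, hw0]
    funext x; cases x <;> simp
  -- the norm-squared
  set S : ℝ := ∑ i, Complex.normSq (v i) with hSdef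
  have hS : star v ⬝ᵥ v = (S : ℂ) := by
    simp [dotProduct, mul_comm, Complex.mul_conj, hSdef]
  have hSpos : 0 < S := by
    obtain ⟨x, hx⟩ := Function.ne_iff.mp hv0
    exact Finset.sum_pos' (fun i _ => Complex.normSq_nonneg _)
      ⟨x, Finset.mem_univ x, by simpa [Complex.normSq_pos] using hx⟩
  -- the quadratic form value
  set a : Fin n → ℝ := fun i => (ζ i).re with ha
  set b : Fin n → ℝ := fun i => (ζ i).im with hb
  have hζab : a ≠ 0 ∨ b ≠ 0 := by
    by_contra h
    push_neg at h
    apply hζ0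
    funext i
    exact Complex.ext (congrFun h.1 i) (congrFun h.2 i)
  have hq : 0 < a ⬝ᵥ D *ᵥ a + b ⬝ᵥ D *ᵥ b := by
    have h1 : ∀ x : Fin n → ℝ, 0 ≤ x ⬝ᵥ D *ᵥ x := fun x => by
      simpa using hD.posSemidef.dotProduct_mulVec_nonneg x
    have h2 : ∀ x : Fin n → ℝ, x ≠ 0 → 0 < x ⬝ᵥ D *ᵥ x := fun x hx => by
      simpa using hD.dotProduct_mulVec_pos hx
    rcases hζab with h | h
    · exact add_pos_of_pos_of_nonneg (h2 a h) (h1 b)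
    · exact add_pos_of_nonneg_of_pos (h1 a) (h2 b h)
  -- the key identity
  have key : μ.re * S = a ⬝ᵥ D *ᵥ a + b ⬝ᵥ D *ᵥ b := by
    have e1 : star v ⬝ᵥ (((Matrix.fromBlocks D C (-Cᵀ) 0).map Complex.ofReal) *ᵥ v)
        = μ * (S : ℂ) := by
      rw [hev, dotProduct_smul, hS, smul_eq_mul]
    have e2 : (star v ⬝ᵥ (((Matrix.fromBlocks D C (-Cᵀ) 0).map Complex.ofReal) *ᵥ v)).re
        = a ⬝ᵥ D *ᵥ a + b ⬝ᵥ D *ᵥ b := by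
      rw [hv]
      rw [fromBlocks_map, fromBlocks_mulVec, Function.star_sumElim,
        sumElim_dotProduct_sumElim]
      have hneg : (-Cᵀ).map (Complex.ofReal) = -(Cᵀ.map Complex.ofReal) := by
        funext i j; simp
      simp only [Matrix.map_zero, Complex.ofReal_zero, hneg, zero_mulVec, add_zero,
        add_mulVec, neg_mulVec, dotProduct_add, dotProduct_neg, Complex.add_re,
        Complex.neg_re, Sum.elim_comp_inl, Sum.elim_comp_inr]
      rw [re_quad, re_cross]
      ring
    have : (μ * (S : ℂ)).re = μ.re * S := by
      simp [Complex.mul_re]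
    rw [e1, this] at e2
    rw [e2]
  nlinarith [hq, hSpos, key]
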